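/- Let A, Â be L×L column-stochastic matrices (nonnegative entries, columns summing to 1) and p̂ a probability vector. Fix k. Assume: (i) Â·p̂ = A·e_k; (ii) Â_{kk} ≥ Â_{kj} for all j ≠ k; (iii) Â_{ii} ≥ Â_{ji} for all i and j ≠ i; (iv) every entry of A outside the k-th column equals 1/L. Then tr(A) ≤ tr(Â), with equality if Â = A and p̂ = e_k. -/

import Mathlib

theorem stmt_5 (L : ℕ) (A Ahat : Matrix (Fin L) (Fin L) ℝ) (p : Fin L → ℝ) (k : Fin L)
    (hA_nonneg : ∀ i j, 0 ≤ A i j) (hA_col : ∀ j, ∑ i, A i j = 1)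
    (hAhat_nonneg : ∀ i j, 0 ≤ Ahat i j) (hAhat_col : ∀ j, ∑ i, Ahat i j = 1)
    (hp_nonneg : ∀ j, 0 ≤ p j) (hp_sum : ∑ j, p j = 1)
    (hmodel : Ahat.mulVec p = A.mulVec (Pi.single k 1))
    (hrow : ∀ j, j ≠ k → Ahat k j ≤ Ahat k k)
    (hdiag : ∀ i j, j ≠ i → Ahat j i ≤ Ahat i i)
    (hoff : ∀ i j, j ≠ k → A i j = 1 / L) :
    A.trace ≤ Ahat.trace ∧ (Ahat = A ∧ p = Pi.single k 1 → A.trace = Ahat.trace) := by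
  have hL : (0:ℝ) < L := by exact_mod_cast k.pos
  constructor
  · -- diagonal entries of Ahat are at least 1/L
    have hdd : ∀ i, (1:ℝ)/L ≤ Ahat i i := by
      intro i
      have h2 : ∑ j, Ahat j i ≤ ∑ _j : Fin L, Ahat i i := by
        apply Finset.sum_le_sum
        intro j _
        by_cases hj : j = i
        · subst hj; exact le_refl _
        · exact hdiag i j hj
      have h3 : ∑ _j : Fin L, Ahat i i = (L:ℝ) * Ahat i i := by
        simp [Finset.sum_const, mul_comm]
      rw [hAhat_col i, h3] at h2
      rw [div_le_iff₀ hL]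
      nlinarith
    -- A k k ≤ Ahat k k
    have hm := congrFun hmodel k
    simp only [Matrix.mulVec, dotProduct] at hm
    have hrhs : ∑ j, A k j * Pi.single (M := fun _ => ℝ) k 1 j = A k k := by
      rw [Finset.sum_eq_single k]
      · simp
      · intro j _ hj; simp [Pi.single_eq_of_ne hj]
      · simp
    have hkk : A k k ≤ Ahat k k := by
      rw [hrhs] at hm
      rw [← hm]
      calc ∑ j, Ahat k j * p j ≤ ∑ j, Ahat k k * p j := by
            apply Finset.sum_le_sum
            intro j _
            by_cases hj : j = k
            · subst hj; exact le_refl _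
            · exact mul_le_mul_of_nonneg_right (hrow j hj) (hp_nonneg j)
        _ = Ahat k k := by rw [← Finset.mul_sum, hp_sum, mul_one]
    unfold Matrix.trace Matrix.diag
    apply Finset.sum_le_sum
    intro i _
    by_cases hi : i = k
    · subst hi; exact hkk
    · rw [hoff i i hi]; exact hdd i
  · rintro ⟨h1, _⟩
    rw [h1]
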